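/- arXiv:2408.09166 — 2 statements merged into one kernel-verified Lean document; each statement's English description precedes it below -/
import Mathlib

section
/- For every integer n ≥ 0, the following identity holds in ℂ (with i = √−1): hsp(n) = ((7n−24)/49)·2^{n−1} + (−33−15i√3)·(−2)ⁿ/(441·(1+i√3)^{n+1}) + (−33+15i√3)·(−2)ⁿ/(441·(1−i√3)^{n+1}) + 1/3. -/
/-- The indices (0-based) of symmetric peaks of a list of naturals. -/
def symPeakIdx (L : List ℕ) : Finset ℕ :=
  (Finset.range L.length).filter (fun i =>
    i + 2 < L.length ∧ L.getD i 0 < L.getD (i+1) 0 ∧ L.getD i 0 = L.getD (i+2) 0)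

/-- `hsp π`: the sum of the heights of the symmetric peaks of `π`. -/
def hspL (L : List ℕ) : ℕ := ∑ i ∈ symPeakIdx L, (L.getD (i+1) 0 - L.getD i 0)

/-- `hsp(n)`: the total sum of heights of symmetric peaks over all compositions of `n`. -/
def hspN (n : ℕ) : ℕ := ∑ c : Composition n, hspL c.blocks

open Finset

/- ### The set of compositions of `n` as a finset of lists -/

def comps : ℕ → Finset (List ℕ)
  | 0 => {[]}
  | (n+1) =>
      (Finset.range (n+1)).attach.biUnion (fun m =>
        have : m.1 < n + 1 := Finset.mem_range.mp m.2
        (comps m.1).image (fun L => (n + 1 - m.1) :: L))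

lemma comps_zero : comps 0 = {[]} := by rw [comps]

lemma sum_comps {M : Type*} [AddCommMonoid M] (f : List ℕ → M) (n : ℕ) :
    ∑ L ∈ comps (n+1), f L = ∑ m ∈ range (n+1), ∑ L ∈ comps m, f ((n+1-m) :: L) := by
  rw [comps]
  rw [Finset.sum_biUnion]
  · rw [← Finset.sum_attach (range (n+1)) (fun m => ∑ L ∈ comps m, f ((n+1-m) :: L))]
    refine Finset.sum_congr rfl fun m _ => ?_
    rw [Finset.sum_image]
    intro a _ b _ hab
    exact List.tail_eq_of_cons_eq hab
  · intro a _ b _ hab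
    apply Finset.disjoint_left.mpr
    intro L hLa hLb
    simp only [Finset.mem_image] at hLa hLb
    obtain ⟨La, _, rfl⟩ := hLa
    obtain ⟨Lb, _, hb⟩ := hLb
    apply hab
    have h1 := List.head_eq_of_cons_eq hb.symm
    have ha' := Finset.mem_range.mp a.2
    have hb' := Finset.mem_range.mp b.2
    exact Subtype.ext (by omega)

lemma mem_comps : ∀ (n : ℕ) (L : List ℕ), L ∈ comps n ↔ L.sum = n ∧ ∀ x ∈ L, 0 < x := by
  intro n
  induction n using Nat.strong_induction_on with
  | _ n ih =>
    intro L
    match n with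
    | 0 =>
      simp only [comps, Finset.mem_singleton]
      constructor
      · rintro rfl; simp
      · rintro ⟨hs, hp⟩
        cases L with
        | nil => rfl
        | cons a L' =>
          exfalso
          have := hp a (by simp)
          simp at hs; omega
    | (n+1) =>
      rw [comps]
      simp only [Finset.mem_biUnion, Finset.mem_attach, Finset.mem_image, true_and]
      constructor
      · rintro ⟨m, L', hL', rfl⟩
        have hm := Finset.mem_range.mp m.2
        have := (ih m.1 hm L').mp hL'
        refine ⟨by simp [this.1]; omega, ?_⟩
        intro x hx
        rcases List.mem_cons.mp hx with h | h
        · omega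
        · exact this.2 x h
      · rintro ⟨hs, hp⟩
        cases L with
        | nil => simp at hs
        | cons a L' =>
          have ha : 0 < a := hp a (by simp)
          simp only [List.sum_cons] at hs
          have haN : a ≤ n + 1 := by omega
          refine ⟨⟨n + 1 - a, Finset.mem_range.mpr (by omega)⟩, L', ?_, ?_⟩
          · exact (ih (n+1-a) (by omega) L').mpr ⟨by omega, fun x hx => hp x (by simp [hx])⟩
          · simp; omega

noncomputable section

/- ### sum of hspL over comps -/

def hh (n : ℕ) : ℕ := ∑ L ∈ comps n, hspL L

lemma hspN_eq (n : ℕ) : hspN n = hh n := by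
  rw [hspN, hh]
  apply Finset.sum_bij' (fun c _ => c.blocks)
    (fun L hL => ⟨L, fun hi => (mem_comps n L).mp hL |>.2 _ hi, ((mem_comps n L).mp hL).1⟩)
  · intro c _; rfl
  · intro L hL; rfl
  · intro c _; rfl
  · intro c _; exact (mem_comps n c.blocks).mpr ⟨c.blocks_sum, fun x hx => c.blocks_pos hx⟩
  · intro L hL; exact Finset.mem_univ _

/- ### the contribution of a symmetric peak at the front -/

def front (a : ℕ) (L : List ℕ) : ℕ :=
  if 2 ≤ L.length ∧ a < L.getD 0 0 ∧ a = L.getD 1 0 then L.getD 0 0 - a else 0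

lemma hspL_eq (L : List ℕ) : hspL L = ∑ i ∈ range L.length,
    (if i + 2 < L.length ∧ L.getD i 0 < L.getD (i+1) 0 ∧ L.getD i 0 = L.getD (i+2) 0
     then L.getD (i+1) 0 - L.getD i 0 else 0) := by
  rw [hspL, symPeakIdx, Finset.sum_filter]

lemma hspL_cons (a : ℕ) (L : List ℕ) : hspL (a :: L) = front a L + hspL L := by
  rw [hspL_eq, hspL_eq, List.length_cons, Finset.sum_range_succ']
  simp only [List.getD_cons_succ, List.getD_cons_zero]
  rw [Nat.add_comm]
  congr 1
  · rw [front]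
    congr 2
    simp only [eq_iff_iff]
    omega
  · refine Finset.sum_congr rfl fun i _ => ?_
    congr 2
    simp only [eq_iff_iff]
    omega

lemma hspL_nil : hspL [] = 0 := rfl

/- ### counting lemmas -/

def S (a m : ℕ) : ℕ := ∑ L ∈ comps m, front a L
def NN (a k : ℕ) : ℕ := ∑ L ∈ comps k, (if a = L.getD 0 0 ∧ L ≠ [] then 1 else 0)
def cc (n : ℕ) : ℕ := (comps n).card
def P (t : ℕ) : ℕ := ∑ j ∈ range t, (t - j) * cc j

lemma cc_succ (n : ℕ) : cc (n+1) = ∑ m ∈ range (n+1), cc m := by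
  have : ∀ k, cc k = ∑ L ∈ comps k, (fun _ => 1) L := by
    intro k; rw [cc, Finset.card_eq_sum_ones]
  rw [this, sum_comps]
  exact Finset.sum_congr rfl fun m _ => (this m).symm

lemma cc_zero : cc 0 = 1 := by rw [cc, comps_zero]; rfl

lemma cc_closed : ∀ n, cc (n+1) = 2^n := by
  intro n
  induction n using Nat.strong_induction_on with
  | _ n ih =>
    match n with
    | 0 => rw [cc_succ]; simp [cc_zero]
    | (k+1) =>
      rw [cc_succ, Finset.sum_range_succ, ← cc_succ, ih k (by omega)]
      rw [pow_succ]; omega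

lemma NN_closed (a k : ℕ) : NN a k = if 0 < a ∧ a ≤ k then cc (k - a) else 0 := by
  match k with
  | 0 =>
    rw [NN, comps_zero, Finset.sum_singleton, if_neg (by simp), if_neg (by omega)]
  | (k+1) =>
    rw [NN, sum_comps]
    have h1 : ∀ m ∈ range (k+1), (∑ L ∈ comps m, if a = ((k+1-m) :: L).getD 0 0 ∧ ((k+1-m) :: L) ≠ [] then 1 else 0)
        = if a = k+1-m then cc m else 0 := by
      intro m hm
      simp only [List.getD_cons_zero, ne_eq, List.cons_ne_nil, not_false_iff, and_true]
      split_ifs with h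
      · simp [cc]
      · exact Finset.sum_const_zero
    rw [Finset.sum_congr rfl h1]
    split_ifs with h
    · rw [Finset.sum_eq_single (k+1-a)]
      · rw [if_pos (by omega)]
      · intro m hm hne
        rw [if_neg]
        have := Finset.mem_range.mp hm
        omega
      · intro hmem
        exfalso
        exact hmem (Finset.mem_range.mpr (by omega))
    · apply Finset.sum_eq_zero
      intro m hm
      rw [if_neg]
      have := Finset.mem_range.mp hm
      omega

lemma front_nil (a : ℕ) : front a [] = 0 := by simp [front]

lemma P_closed (t : ℕ) : P t = 2^t - 1 := by
  induction t with
  | zero => simp [P]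
  | succ t ih =>
    have e1 : ∀ j ∈ range (t+1), (t+1-j)*cc j = (t-j)*cc j + cc j := by
      intro j hj
      have := Finset.mem_range.mp hj
      have h' : t+1-j = (t-j)+1 := by omega
      rw [h', add_mul, one_mul]
    rw [P, Finset.sum_congr rfl e1, Finset.sum_add_distrib, Finset.sum_range_succ,
      Nat.sub_self, zero_mul, add_zero, ← P, ih, ← cc_succ, cc_closed]
    have : 1 ≤ 2^t := Nat.one_le_two_pow
    rw [pow_succ]; omega

lemma S_closed (a m : ℕ) (ha : 0 < a) : S a m = 2 ^ (m - 2*a) - 1 := by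
  match m with
  | 0 =>
    rw [S, comps_zero]
    simp [front_nil]
  | (m+1) =>
    rw [S, sum_comps]
    have h1 : ∀ k ∈ range (m+1), (∑ L ∈ comps k, front a ((m+1-k) :: L))
        = if a ≤ k ∧ k + a < m + 1 then (m+1-k-a) * cc (k-a) else 0 := by
      intro k hk
      have hkm := Finset.mem_range.mp hk
      have h2 : ∀ L : List ℕ, front a ((m+1-k) :: L) =
          (if a < m+1-k then m+1-k-a else 0) * (if a = L.getD 0 0 ∧ L ≠ [] then 1 else 0) := by
        intro L
        rw [front]
        simp only [List.length_cons, List.getD_cons_zero, List.getD_cons_succ]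
        rcases L with _ | ⟨b, L'⟩
        · simp only [List.length_nil, ne_eq, not_true_eq_false, and_false, if_false, mul_zero]
          rw [if_neg]; omega
        · simp only [List.length_cons, List.getD_cons_zero, ne_eq, List.cons_ne_nil,
            not_false_iff, and_true]
          split_ifs with h1 h2 h3 h2 <;> simp_all <;> omega
      rw [Finset.sum_congr rfl (fun L _ => h2 L), ← Finset.mul_sum, ← NN, NN_closed]
      split_ifs <;> first | rfl | (exfalso; omega) | simp
    rw [Finset.sum_congr rfl h1]
    have hsub : ∀ k ∈ range (m+1), k ∉ Finset.Ico a (m+1-a) →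
        (if a ≤ k ∧ k + a < m + 1 then (m+1-k-a) * cc (k-a) else 0) = 0 := by
      intro k _ hk
      rw [if_neg]
      intro ⟨h1, h2⟩
      exact hk (Finset.mem_Ico.mpr ⟨h1, by omega⟩)
    rw [← Finset.sum_subset (fun k hk => Finset.mem_range.mpr (by have := (Finset.mem_Ico.mp hk).2; omega)) hsub]
    rw [Finset.sum_Ico_eq_sum_range]
    have : m + 1 - a - a = m + 1 - 2*a := by omega
    rw [this]
    have h3 : ∀ i ∈ range (m+1-2*a), (if a ≤ a + i ∧ (a+i) + a < m + 1 then (m+1-(a+i)-a) * cc ((a+i)-a) else 0)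
        = (m+1-2*a - i) * cc i := by
      intro i hi
      have := Finset.mem_range.mp hi
      rw [if_pos (by omega)]
      congr 1
      · omega
      · congr 1; omega
    rw [Finset.sum_congr rfl h3, ← P, P_closed]

def E (n : ℕ) : ℕ := ∑ m ∈ range n, S (n - m) m

lemma E_eq (n : ℕ) : E n = ∑ m ∈ range n, (2 ^ (m - 2*(n-m)) - 1) := by
  refine Finset.sum_congr rfl fun m hm => ?_
  have := Finset.mem_range.mp hm
  rw [S_closed _ _ (by omega)]

lemma E_rec (n : ℕ) : E (n+4) + 1 = E (n+1) + 2^(n+1) := by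
  rw [E_eq, E_eq, Finset.sum_range_succ]
  rw [show n+3 - 2*(n+4-(n+3)) = n+1 by omega]
  have key : ∑ x ∈ range (n+3), (2^(x - 2*(n+4-x)) - 1)
      = ∑ m ∈ range (n+1), (2^(m - 2*(n+1-m)) - 1) := by
    rw [Finset.sum_range_succ', Finset.sum_range_succ']
    have e : ∀ x ∈ range (n+1), (2^((x+1+1) - 2*(n+4-(x+1+1))) - 1)
        = (2^(x - 2*(n+1-x)) - 1) := by
      intro x hx
      have hx' := Finset.mem_range.mp hx
      have h' : (x+1+1) - 2*(n+4-(x+1+1)) = x - 2*(n+1-x) := by omega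
      rw [h']
    rw [Finset.sum_congr rfl e]
    rw [show (0+1) - 2*(n+4-(0+1)) = 0 by omega, show 0 - 2*(n+4-0) = 0 by omega]
    simp
  rw [key]
  have : 1 ≤ 2^(n+1) := Nat.one_le_two_pow
  omega

/- ### recurrences for hh -/

lemma hh_E (n : ℕ) : hh (n+1) = (∑ m ∈ range (n+1), hh m) + E (n+1) := by
  rw [hh, sum_comps, E, ← Finset.sum_add_distrib]
  refine Finset.sum_congr rfl fun m hm => ?_
  rw [hh, S, ← Finset.sum_add_distrib]
  refine Finset.sum_congr rfl fun L hL => ?_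
  rw [hspL_cons, Nat.add_comm]

lemma hh_zero : hh 0 = 0 := by rw [hh, comps_zero]; simp [hspL_nil]

lemma E1 : E 1 = 0 := by rw [E_eq]; simp
lemma E2 : E 2 = 0 := by rw [E_eq]; decide
lemma E3 : E 3 = 0 := by rw [E_eq]; decide
lemma E4 : E 4 = 1 := by rw [E_eq]; decide

lemma hh1 : hh 1 = 0 := by rw [hh_E]; simp [hh_zero, E1]
lemma hh2 : hh 2 = 0 := by
  rw [hh_E]; rw [Finset.sum_range_succ, Finset.sum_range_one, hh_zero, hh1, E2]
lemma hh3 : hh 3 = 0 := by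
  rw [hh_E]
  rw [Finset.sum_range_succ, Finset.sum_range_succ, Finset.sum_range_one, hh_zero, hh1, hh2, E3]
lemma hh4 : hh 4 = 1 := by
  rw [hh_E]
  rw [Finset.sum_range_succ, Finset.sum_range_succ, Finset.sum_range_succ, Finset.sum_range_one,
    hh_zero, hh1, hh2, hh3, E4]

lemma hh_step (n : ℕ) : hh (n+2) + E (n+1) = 2 * hh (n+1) + E (n+2) := by
  have h1 := hh_E (n+1)
  have h2 := hh_E n
  rw [Finset.sum_range_succ] at h1
  rw [show n+1+1 = n+2 from rfl] at h1
  omega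

lemma hh_rec4 (n : ℕ) : hh (n+5) + 2 * hh (n+1) + 2^(n+1) = 2 * hh (n+4) + hh (n+2) + 2^(n+2) := by
  have h1 := hh_step (n+3)
  have h2 := hh_step n
  have h3 := E_rec n
  have h4 := E_rec (n+1)
  rw [show n+3+2 = n+5 from rfl, show n+3+1 = n+4 from rfl] at h1
  rw [show n+1+4 = n+5 from rfl, show n+1+1 = n+2 from rfl] at h4
  have h5 : (2:ℕ)^(n+2) = 2 * 2^(n+1) := by rw [pow_succ]; ring
  omega

/- ### the closed form -/

open Complex

def F (n : ℕ) : ℂ :=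
      ((7 * n - 24) / 49) * (2 : ℂ) ^ ((n : ℤ) - 1)
      + (-33 - 15 * I * Real.sqrt 3) * (-2 : ℂ) ^ n /
          (441 * (1 + I * Real.sqrt 3) ^ (n + 1))
      + (-33 + 15 * I * Real.sqrt 3) * (-2 : ℂ) ^ n /
          (441 * (1 - I * Real.sqrt 3) ^ (n + 1))
      + 1 / 3

lemma hsq : (I * (Real.sqrt 3 : ℝ)) ^ 2 = -3 := by
  rw [mul_pow, I_sq, ← Complex.ofReal_pow, Real.sq_sqrt (by norm_num : (0:ℝ) ≤ 3)]
  norm_num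

lemma hz3 : (1 + I * (Real.sqrt 3 : ℝ)) ^ 3 = -8 := by
  linear_combination (I * (Real.sqrt 3 : ℝ) + 3) * hsq

lemma hw3 : (1 - I * (Real.sqrt 3 : ℝ)) ^ 3 = -8 := by
  linear_combination (3 - I * (Real.sqrt 3 : ℝ)) * hsq

lemma hz : (1 + I * (Real.sqrt 3 : ℝ)) ≠ 0 := by
  intro h
  have h2 := hz3
  rw [h] at h2
  norm_num at h2

lemma hw : (1 - I * (Real.sqrt 3 : ℝ)) ≠ 0 := by
  intro h
  have h2 := hw3
  rw [h] at h2
  norm_num at h2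

lemma hzpow (k : ℕ) : (2 : ℂ) ^ ((k : ℤ) - 1) = 2 ^ k / 2 := by
  rw [zpow_sub₀ (two_ne_zero), zpow_natCast, zpow_one]

lemma comp_rec (c z : ℂ) (hz0 : z ≠ 0) (h3 : z ^ 3 = -8) (m : ℕ) :
    c * (-2) ^ (m+5) / (441 * z ^ (m+5+1)) + 2 * (c * (-2) ^ (m+1) / (441 * z ^ (m+1+1)))
      = 2 * (c * (-2) ^ (m+4) / (441 * z ^ (m+4+1))) + c * (-2) ^ (m+2) / (441 * z ^ (m+2+1)) := by
  have e6 : z ^ (m+5+1) = z ^ m * z ^ 3 * z ^ 3 := by ring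
  have e5 : z ^ (m+4+1) = z ^ m * z ^ 3 * z ^ 2 := by ring
  have e3' : z ^ (m+2+1) = z ^ m * z ^ 3 := by ring
  have e2 : z ^ (m+1+1) = z ^ m * z ^ 2 := by ring
  have b1 : (-2:ℂ) ^ (m+5) = (-2) ^ m * (-32) := by ring
  have b2 : (-2:ℂ) ^ (m+4) = (-2) ^ m * 16 := by ring
  have b3 : (-2:ℂ) ^ (m+2) = (-2) ^ m * 4 := by ring
  have b4 : (-2:ℂ) ^ (m+1) = (-2) ^ m * (-2) := by ring
  rw [e6, e5, e3', e2, h3, b1, b2, b3, b4]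
  have hm : z ^ m ≠ 0 := pow_ne_zero _ hz0
  have h2 : z ^ 2 ≠ 0 := pow_ne_zero _ hz0
  field_simp
  ring

set_option maxHeartbeats 1000000 in
lemma F_rec (m : ℕ) : F (m+5) + 2 * F (m+1) + 2^(m+1) = 2 * F (m+4) + F (m+2) + 2^(m+2) := by
  have hA := comp_rec (-33 - 15 * I * (Real.sqrt 3 : ℝ)) _ hz hz3 m
  have hB := comp_rec (-33 + 15 * I * (Real.sqrt 3 : ℝ)) _ hw hw3 m
  have hG : ((7*(((m:ℂ))+5) - 24)/49) * ((2:ℂ)^(m+5)/2) + 2*(((7*((m:ℂ)+1) - 24)/49) * ((2:ℂ)^(m+1)/2)) + (2:ℂ)^(m+1)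
      = 2*(((7*((m:ℂ)+4) - 24)/49) * ((2:ℂ)^(m+4)/2)) + ((7*((m:ℂ)+2) - 24)/49) * ((2:ℂ)^(m+2)/2) + (2:ℂ)^(m+2) := by
    ring
  simp only [F, hzpow]
  push_cast
  set A5 := (-33 - 15 * I * (Real.sqrt 3 : ℝ)) * (-2:ℂ) ^ (m+5) / (441 * (1 + I * (Real.sqrt 3 : ℝ)) ^ (m+5+1)) with hA5
  set A4 := (-33 - 15 * I * (Real.sqrt 3 : ℝ)) * (-2:ℂ) ^ (m+4) / (441 * (1 + I * (Real.sqrt 3 : ℝ)) ^ (m+4+1)) with hA4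
  set A2 := (-33 - 15 * I * (Real.sqrt 3 : ℝ)) * (-2:ℂ) ^ (m+2) / (441 * (1 + I * (Real.sqrt 3 : ℝ)) ^ (m+2+1)) with hA2
  set A1 := (-33 - 15 * I * (Real.sqrt 3 : ℝ)) * (-2:ℂ) ^ (m+1) / (441 * (1 + I * (Real.sqrt 3 : ℝ)) ^ (m+1+1)) with hA1
  set B5 := (-33 + 15 * I * (Real.sqrt 3 : ℝ)) * (-2:ℂ) ^ (m+5) / (441 * (1 - I * (Real.sqrt 3 : ℝ)) ^ (m+5+1)) with hB5
  set B4 := (-33 + 15 * I * (Real.sqrt 3 : ℝ)) * (-2:ℂ) ^ (m+4) / (441 * (1 - I * (Real.sqrt 3 : ℝ)) ^ (m+4+1)) with hB4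
  set B2 := (-33 + 15 * I * (Real.sqrt 3 : ℝ)) * (-2:ℂ) ^ (m+2) / (441 * (1 - I * (Real.sqrt 3 : ℝ)) ^ (m+2+1)) with hB2
  set B1 := (-33 + 15 * I * (Real.sqrt 3 : ℝ)) * (-2:ℂ) ^ (m+1) / (441 * (1 - I * (Real.sqrt 3 : ℝ)) ^ (m+1+1)) with hB1
  clear hA5 hA4 hA2 hA1 hB5 hB4 hB2 hB1
  clear_value A5 A4 A2 A1 B5 B4 B2 B1
  linear_combination hA + hB + hG

lemma F0 : F 0 = 0 := by
  simp only [F]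
  norm_num
  field_simp [hz, hw]
  linear_combination (-1323 : ℂ) * hsq

lemma F1 : F 1 = 0 := by
  simp only [F]
  norm_num
  field_simp [hz, hw]
  linear_combination (6174 : ℂ) * hsq + (-882 : ℂ) * (I * (Real.sqrt 3 : ℝ))^2 * hsq

lemma F2 : F 2 = 0 := by
  simp only [F]
  norm_num
  field_simp [hz, hw]
  linear_combination (-14553 : ℂ) * hsq + (-11466 : ℂ) * (I * (Real.sqrt 3 : ℝ))^2 * hsq + (4851 : ℂ) * (I * (Real.sqrt 3 : ℝ))^4 * hsq

lemma F3 : F 3 = 0 := by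
  simp only [F]
  norm_num
  field_simp [hz, hw]
  linear_combination (27783 : ℂ) * hsq + (91287 : ℂ) * (I * (Real.sqrt 3 : ℝ))^2 * hsq + (-40131 : ℂ) * (I * (Real.sqrt 3 : ℝ))^4 * hsq + (5733 : ℂ) * (I * (Real.sqrt 3 : ℝ))^6 * hsq

lemma F4 : F 4 = 1 := by
  simp only [F]
  norm_num
  field_simp [hz, hw]
  linear_combination (-52038 : ℂ) * hsq + (-381024 : ℂ) * (I * (Real.sqrt 3 : ℝ))^2 * hsq + (100548 : ℂ) * (I * (Real.sqrt 3 : ℝ))^4 * hsq + (-7056 : ℂ) * (I * (Real.sqrt 3 : ℝ))^6 * hsq + (882 : ℂ) * (I * (Real.sqrt 3 : ℝ))^8 * hsq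

lemma key : ∀ n : ℕ, (hh n : ℂ) = F n := by
  intro n
  induction n using Nat.strong_induction_on with
  | _ n ih =>
    match n with
    | 0 => rw [hh_zero, F0]; norm_num
    | 1 => rw [hh1, F1]; norm_num
    | 2 => rw [hh2, F2]; norm_num
    | 3 => rw [hh3, F3]; norm_num
    | 4 => rw [hh4, F4]; norm_num
    | (m+5) =>
      have h := congrArg (fun x : ℕ => (x : ℂ)) (hh_rec4 m)
      push_cast at h
      rw [ih (m+1) (by omega), ih (m+2) (by omega), ih (m+4) (by omega)] at h
      linear_combination h - F_rec m

end

open Complex in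
/-- For every `n ≥ 0`,
`hsp(n) = ((7n−24)/49)·2^{n−1} + (−33−15i√3)·(−2)ⁿ/(441·(1+i√3)^{n+1})
        + (−33+15i√3)·(−2)ⁿ/(441·(1−i√3)^{n+1}) + 1/3`. -/
theorem hspN_closed_form (n : ℕ) :
    (hspN n : ℂ) =
      ((7 * n - 24) / 49) * (2 : ℂ) ^ ((n : ℤ) - 1)
      + (-33 - 15 * I * Real.sqrt 3) * (-2 : ℂ) ^ n /
          (441 * (1 + I * Real.sqrt 3) ^ (n + 1))
      + (-33 + 15 * I * Real.sqrt 3) * (-2 : ℂ) ^ n /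
          (441 * (1 - I * Real.sqrt 3) ^ (n + 1))
      + 1 / 3 := by
  rw [hspN_eq n, key n]
  rfl
end

section
/- Let F(x,y,p,d) = Σ_{n,k≥0} Σ_{π ∈ C_{n,k}} x^n y^k p^{sv(π)} d^{dsv(π)} ∈ ℚ[[x,y,p,d]], and for a positive integer a let F_a(x,y,p,d) = Σ_{n,k≥1} Σ_{π ∈ C_{n,k} with first part π₁ = a} x^n y^k p^{sv(π)} d^{dsv(π)}. Then F_a · (1 − y²·x^a·Σ_{j=1}^{a−1} x^j·(p·d^{a−j} − 1)) = x^a·y·F. -/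
/-- The indices (0-based) of symmetric valleys of a list of naturals:
`i` is a symmetric valley if `L i > L (i+1)` and `L i = L (i+2)`. -/
def symValleyIdx (L : List ℕ) : Finset ℕ :=
  (Finset.range L.length).filter (fun i =>
    i + 2 < L.length ∧ L.getD i 0 > L.getD (i+1) 0 ∧ L.getD i 0 = L.getD (i+2) 0)

/-- `sv π`: the number of symmetric valleys of `π`. -/
def svL (L : List ℕ) : ℕ := (symValleyIdx L).card

/-- `dsv π`: the sum of the depths of the symmetric valleys of `π`. -/
def dsvL (L : List ℕ) : ℕ := ∑ i ∈ symValleyIdx L, (L.getD i 0 - L.getD (i+1) 0)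

/-- Variables: `X 0 = x`, `X 1 = y`, `X 2 = p`, `X 3 = d`. -/
noncomputable abbrev Xv : Fin 4 → MvPowerSeries (Fin 4) ℚ := MvPowerSeries.X

/-- `F(x,y,p,d) = Σ_{n,k≥0} Σ_{π ∈ C_{n,k}} x^n y^k p^{sv(π)} d^{dsv(π)}`. -/
noncomputable def Fdsv : MvPowerSeries (Fin 4) ℚ := fun m =>
  ((Finset.univ : Finset (Composition (m 0))).filter (fun c =>
    c.length = m 1 ∧ svL c.blocks = m 2 ∧ dsvL c.blocks = m 3)).card

/-- `F_a(x,y,p,d)`: as `F`, but restricted to compositions whose first part equals `a`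
(such compositions automatically have `n, k ≥ 1`). -/
noncomputable def FdsvA (a : ℕ) : MvPowerSeries (Fin 4) ℚ := fun m =>
  ((Finset.univ : Finset (Composition (m 0))).filter (fun c =>
    c.blocks.head? = some a ∧
    c.length = m 1 ∧ svL c.blocks = m 2 ∧ dsvL c.blocks = m 3)).card

/-- `b :: L` has a symmetric valley at 0. -/
def specHead (b : ℕ) (L : List ℕ) : Prop :=
  1 < L.length ∧ L.getD 0 0 < b ∧ L.getD 1 0 = b

instance (b : ℕ) (L : List ℕ) : Decidable (specHead b L) := by
  unfold specHead; infer_instance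

lemma mem_symValleyIdx {L : List ℕ} {i : ℕ} : i ∈ symValleyIdx L ↔
    i + 2 < L.length ∧ L.getD (i+1) 0 < L.getD i 0 ∧ L.getD i 0 = L.getD (i+2) 0 := by
  simp only [symValleyIdx, Finset.mem_filter, Finset.mem_range, gt_iff_lt]
  constructor
  · rintro ⟨_, h⟩; exact h
  · rintro ⟨h1, h2, h3⟩; exact ⟨by omega, h1, h2, h3⟩

lemma symValleyIdx_cons (b : ℕ) (L : List ℕ) :
    symValleyIdx (b :: L) =
      ((symValleyIdx L).image (· + 1)) ∪ (if specHead b L then {0} else ∅) := by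
  ext i
  cases i with
  | zero =>
    simp only [mem_symValleyIdx, Finset.mem_union, Finset.mem_image, List.length_cons,
      List.getD_cons_zero, List.getD_cons_succ]
    constructor
    · rintro ⟨h1, h2, h3⟩
      right
      rw [if_pos ⟨by omega, h2, h3.symm⟩]
      simp
    · rintro (⟨x, _, hx⟩ | h)
      · omega
      · by_cases hs : specHead b L
        · exact ⟨by have := hs.1; omega, hs.2.1, hs.2.2.symm⟩
        · rw [if_neg hs] at h; simp at h
  | succ i =>
    simp only [mem_symValleyIdx, Finset.mem_union, Finset.mem_image, List.length_cons,
      List.getD_cons_succ]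
    constructor
    · rintro ⟨h1, h2, h3⟩
      left
      exact ⟨i, ⟨by omega, h2, h3⟩, rfl⟩
    · rintro (⟨x, hx, hxe⟩ | h)
      · obtain rfl : x = i := by omega
        obtain ⟨h1, h2, h3⟩ := hx
        exact ⟨by omega, h2, h3⟩
      · by_cases hs : specHead b L
        · rw [if_pos hs] at h; simp at h
        · rw [if_neg hs] at h; simp at h

lemma zero_not_mem_image : ∀ (s : Finset ℕ), 0 ∉ s.image (· + 1) := by
  intro s; simp

lemma svL_cons (b : ℕ) (L : List ℕ) :
    svL (b :: L) = svL L + if specHead b L then 1 else 0 := by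
  rw [svL, symValleyIdx_cons, Finset.card_union_of_disjoint, Finset.card_image_of_injective _
    (add_left_injective 1)]
  · congr 1
    split <;> simp
  · split
    · simp only [Finset.disjoint_singleton_right, Finset.mem_image]
      rintro ⟨x, _, hx⟩; omega
    · simp

lemma dsvL_cons (b : ℕ) (L : List ℕ) :
    dsvL (b :: L) = dsvL L + if specHead b L then b - L.getD 0 0 else 0 := by
  have hdis : Disjoint ((symValleyIdx L).image (· + 1))
      (if specHead b L then ({0} : Finset ℕ) else ∅) := by
    split
    · simp only [Finset.disjoint_singleton_right, Finset.mem_image]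
      rintro ⟨x, _, hx⟩; omega
    · simp
  have hinj : ∀ x ∈ symValleyIdx L, ∀ y ∈ symValleyIdx L, x + 1 = y + 1 → x = y := by
    intro x _ y _ h; omega
  rw [dsvL, symValleyIdx_cons, Finset.sum_union hdis, Finset.sum_image hinj]
  have h1 : ∀ i ∈ symValleyIdx L,
      (b :: L).getD (i+1) 0 - (b :: L).getD (i+1+1) 0 = L.getD i 0 - L.getD (i+1) 0 := by
    intro i _
    simp [List.getD_cons_succ]
  rw [Finset.sum_congr rfl h1]
  congr 1
  split <;> simp [List.getD_cons_zero, List.getD_cons_succ]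
/-! ### Counting compositions -/

def cntF (n k s t : ℕ) : ℕ :=
  ((Finset.univ : Finset (Composition n)).filter (fun c =>
    c.length = k ∧ svL c.blocks = s ∧ dsvL c.blocks = t)).card

def cntA (a n k s t : ℕ) : ℕ :=
  ((Finset.univ : Finset (Composition n)).filter (fun c =>
    c.blocks.head? = some a ∧
    c.length = k ∧ svL c.blocks = s ∧ dsvL c.blocks = t)).card

def cntNS (a n k s t : ℕ) : ℕ :=
  ((Finset.univ : Finset (Composition n)).filter (fun c =>
    (c.length = k ∧ svL c.blocks = s ∧ dsvL c.blocks = t) ∧ ¬ specHead a c.blocks)).card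

def cntS (a j n k s t : ℕ) : ℕ :=
  ((Finset.univ : Finset (Composition n)).filter (fun c =>
    (c.length = k ∧ svL c.blocks = s ∧ dsvL c.blocks = t) ∧
    c.blocks.head? = some j ∧ c.blocks.tail.head? = some a)).card

lemma head?_eq_cons {L : List ℕ} {a : ℕ} (h : L.head? = some a) : L = a :: L.tail := by
  cases L with
  | nil => simp at h
  | cons x T => simp_all

/-- The basic transfer lemma: compositions of `a + n` with first part `a` satisfying `P`
on blocks correspond to compositions of `n` with `P (a :: blocks)`. -/
lemma card_first_eq (a n : ℕ) (ha : 0 < a) (P : List ℕ → Prop) [DecidablePred P] :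
    ((Finset.univ : Finset (Composition (a + n))).filter (fun c =>
      c.blocks.head? = some a ∧ P c.blocks)).card
    = ((Finset.univ : Finset (Composition n)).filter (fun c => P (a :: c.blocks))).card := by
  apply Finset.card_bij'
    (i := fun c hc => (⟨c.blocks.tail,
        fun hi => c.blocks_pos (List.mem_of_mem_tail hi),
        by
          have h := (Finset.mem_filter.1 hc).2.1
          have h2 := c.blocks_sum
          rw [head?_eq_cons h] at h2
          simpa using h2⟩ : Composition n))
    (j := fun d _ => (⟨a :: d.blocks,
        fun hi => by
          rcases List.mem_cons.1 hi with h | h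
          · omega
          · exact d.blocks_pos h,
        by simp [d.blocks_sum]⟩ : Composition (a + n)))
  case hi =>
    intro c hc
    simp only [Finset.mem_filter, Finset.mem_univ, true_and] at hc ⊢
    rw [← head?_eq_cons hc.1]
    exact hc.2
  case hj =>
    intro d hd
    simp only [Finset.mem_filter, Finset.mem_univ, true_and] at hd ⊢
    exact ⟨rfl, hd⟩
  case left_inv =>
    intro c hc
    have h := (Finset.mem_filter.1 hc).2.1
    apply Composition.ext
    simp [← head?_eq_cons h]
  case right_inv =>
    intro d hd
    apply Composition.ext
    simp

lemma comp_len_eq {n : ℕ} (c : Composition n) : c.length = c.blocks.length := rfl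

/-- vanishing: no composition with first part `a` if `n < a` or `k = 0`. -/
lemma cntA_eq_zero {a n k s t : ℕ} (h : n < a ∨ k = 0) : cntA a n k s t = 0 := by
  rw [cntA, Finset.card_eq_zero, Finset.filter_eq_empty_iff]
  rintro c -
  rintro ⟨h1, h2, -⟩
  have hc : c.blocks = a :: c.blocks.tail := head?_eq_cons h1
  rcases h with h | h
  · have := c.blocks_sum
    rw [hc] at this
    simp only [List.sum_cons] at this
    omega
  · rw [comp_len_eq, hc] at h2
    simp [h] at h2
lemma spec_iff {a j : ℕ} (hj2 : j < a) (L : List ℕ) :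
    (specHead a L ∧ L.getD 0 0 = j) ↔ (L.head? = some j ∧ L.tail.head? = some a) := by
  rcases L with _ | ⟨x, _ | ⟨y, T⟩⟩ <;>
    simp [specHead, List.getD_cons_zero, List.getD_cons_succ] <;> omega

lemma getD_zero_mem {L : List ℕ} (h : L ≠ []) : L.getD 0 0 ∈ L := by
  cases L with
  | nil => simp at h
  | cons x T => simp [List.getD_cons_zero]

/-- Split a count of compositions according to whether the blocks start with
`(j, a)` for some `j < a`. -/
lemma split_spec (a : ℕ) (ha : 1 ≤ a) (n : ℕ) (P : List ℕ → Prop) [DecidablePred P] :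
    ((Finset.univ : Finset (Composition n)).filter (fun c => P c.blocks)).card
    = ((Finset.univ : Finset (Composition n)).filter
        (fun c => P c.blocks ∧ ¬ specHead a c.blocks)).card
      + ∑ j ∈ Finset.Icc 1 (a-1),
        ((Finset.univ : Finset (Composition n)).filter (fun c => P c.blocks ∧
          c.blocks.head? = some j ∧ c.blocks.tail.head? = some a)).card := by
  classical
  rw [← Finset.card_filter_add_card_filter_not
    (s := (Finset.univ : Finset (Composition n)).filter (fun c => P c.blocks))
    (p := fun c => specHead a c.blocks), add_comm]
  congr 1
  · rw [Finset.filter_filter]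
  · rw [Finset.filter_filter]
    rw [Finset.card_eq_sum_card_fiberwise
      (f := fun c : Composition n => c.blocks.getD 0 0) (t := Finset.Icc 1 (a-1))]
    · apply Finset.sum_congr rfl
      intro j hj
      simp only [Finset.mem_Icc] at hj
      congr 1
      rw [Finset.filter_filter]
      apply Finset.filter_congr
      intro c _
      have := spec_iff (a := a) (j := j) (by omega) c.blocks
      constructor
      · rintro ⟨⟨hP, hs⟩, hg⟩
        exact ⟨hP, (this.mp ⟨hs, hg⟩)⟩
      · rintro ⟨hP, hh⟩
        obtain ⟨hs, hg⟩ := this.mpr hh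
        exact ⟨⟨hP, hs⟩, hg⟩
    · intro c hc
      simp only [Finset.mem_coe, Finset.mem_filter] at hc
      obtain ⟨-, -, hs⟩ := hc
      have hlen : c.blocks ≠ [] := by
        intro h
        rw [h] at hs
        exact absurd hs.1 (by simp)
      have hmem := getD_zero_mem hlen
      have hpos := c.blocks_pos hmem
      simp only [Finset.mem_coe, Finset.mem_Icc]
      have := hs.2.1
      omega
lemma not_spec_of_head {j a : ℕ} (hja : j ≤ a) {bl : List ℕ} (h : bl.head? = some a) :
    ¬ specHead j bl := by
  rintro ⟨h1, h2, h3⟩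
  rw [head?_eq_cons h] at h2
  simp [List.getD_cons_zero] at h2
  omega

lemma decompS {a j n k s t : ℕ} (ha : 1 ≤ a) (hj1 : 1 ≤ j) (hj2 : j ≤ a) :
    cntS a j n k s t = cntA a (n - j) (k - 1) s t := by
  by_cases hk : k = 0
  · subst hk
    rw [cntA_eq_zero (Or.inr rfl)]
    rw [cntS, Finset.card_eq_zero, Finset.filter_eq_empty_iff]
    rintro c - ⟨⟨h1, -⟩, h2, -⟩
    rw [comp_len_eq] at h1
    rw [List.length_eq_zero_iff.mp h1] at h2
    simp at h2
  by_cases hn : j ≤ n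
  swap
  · rw [cntA_eq_zero (Or.inl (by omega))]
    rw [cntS, Finset.card_eq_zero, Finset.filter_eq_empty_iff]
    rintro c - ⟨-, h2, -⟩
    have hc := head?_eq_cons h2
    have := c.blocks_sum
    rw [hc] at this
    simp only [List.sum_cons] at this
    omega
  obtain ⟨m, rfl⟩ : ∃ m, n = j + m := ⟨n - j, by omega⟩
  rw [Nat.add_sub_cancel_left]
  rw [cntS]
  have e1 : ((Finset.univ : Finset (Composition (j + m))).filter (fun c =>
      (c.length = k ∧ svL c.blocks = s ∧ dsvL c.blocks = t) ∧
      c.blocks.head? = some j ∧ c.blocks.tail.head? = some a)).card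
      = ((Finset.univ : Finset (Composition (j + m))).filter (fun c =>
        c.blocks.head? = some j ∧
        (c.blocks.length = k ∧ svL c.blocks = s ∧ dsvL c.blocks = t ∧
          c.blocks.tail.head? = some a))).card := by
    congr 1
    apply Finset.filter_congr
    intro c _
    constructor
    · rintro ⟨⟨h1, h2, h3⟩, h4, h5⟩
      exact ⟨h4, h1, h2, h3, h5⟩
    · rintro ⟨h4, h1, h2, h3, h5⟩
      exact ⟨⟨h1, h2, h3⟩, h4, h5⟩
  rw [e1, card_first_eq j m (by omega)
    (P := fun bl => bl.length = k ∧ svL bl = s ∧ dsvL bl = t ∧ bl.tail.head? = some a)]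
  rw [cntA]
  congr 1
  apply Finset.filter_congr
  intro c _
  simp only [List.length_cons, List.tail_cons]
  constructor
  · rintro ⟨h1, h2, h3, h5⟩
    have hns := not_spec_of_head hj2 h5
    rw [svL_cons, if_neg hns, add_zero] at h2
    rw [dsvL_cons, if_neg hns, add_zero] at h3
    exact ⟨h5, by rw [comp_len_eq]; omega, h2, h3⟩
  · rintro ⟨h5, h1, h2, h3⟩
    have hns := not_spec_of_head hj2 h5
    rw [comp_len_eq] at h1
    refine ⟨by omega, ?_, ?_, h5⟩
    · rw [svL_cons, if_neg hns, add_zero]; exact h2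
    · rw [dsvL_cons, if_neg hns, add_zero]; exact h3

lemma decompA {a m k s t : ℕ} (ha : 1 ≤ a) :
    cntA a (a + m) (k + 1) s t = cntNS a m k s t
      + ∑ j ∈ Finset.Icc 1 (a-1),
          (if 1 ≤ s ∧ a - j ≤ t then cntS a j m k (s-1) (t-(a-j)) else 0) := by
  rw [cntA]
  have e1 : ((Finset.univ : Finset (Composition (a + m))).filter (fun c =>
      c.blocks.head? = some a ∧
      c.length = (k+1) ∧ svL c.blocks = s ∧ dsvL c.blocks = t)).card
      = ((Finset.univ : Finset (Composition (a + m))).filter (fun c =>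
        c.blocks.head? = some a ∧
        (c.blocks.length = (k+1) ∧ svL c.blocks = s ∧ dsvL c.blocks = t))).card := rfl
  rw [e1, card_first_eq a m (by omega)
    (P := fun bl => bl.length = (k+1) ∧ svL bl = s ∧ dsvL bl = t)]
  rw [split_spec a ha m
    (P := fun bl => (a :: bl).length = (k+1) ∧ svL (a :: bl) = s ∧ dsvL (a :: bl) = t)]
  congr 1
  · rw [cntNS]
    congr 1
    apply Finset.filter_congr
    intro c _
    simp only [List.length_cons]
    constructor
    · rintro ⟨⟨h1, h2, h3⟩, hns⟩
      rw [svL_cons, if_neg hns, add_zero] at h2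
      rw [dsvL_cons, if_neg hns, add_zero] at h3
      exact ⟨⟨by rw [comp_len_eq]; omega, h2, h3⟩, hns⟩
    · rintro ⟨⟨h1, h2, h3⟩, hns⟩
      rw [comp_len_eq] at h1
      refine ⟨⟨by omega, ?_, ?_⟩, hns⟩
      · rw [svL_cons, if_neg hns, add_zero]; exact h2
      · rw [dsvL_cons, if_neg hns, add_zero]; exact h3
  · apply Finset.sum_congr rfl
    intro j hj
    simp only [Finset.mem_Icc] at hj
    have hja : j < a := by omega
    by_cases hcond : 1 ≤ s ∧ a - j ≤ t
    · rw [if_pos hcond, cntS]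
      congr 1
      apply Finset.filter_congr
      intro c _
      simp only [List.length_cons]
      constructor
      · rintro ⟨⟨h1, h2, h3⟩, h4, h5⟩
        obtain ⟨hsp, hg⟩ := (spec_iff hja c.blocks).mpr ⟨h4, h5⟩
        rw [svL_cons, if_pos hsp] at h2
        rw [dsvL_cons, if_pos hsp, hg] at h3
        refine ⟨⟨by rw [comp_len_eq]; omega, by omega, by omega⟩, h4, h5⟩
      · rintro ⟨⟨h1, h2, h3⟩, h4, h5⟩
        obtain ⟨hsp, hg⟩ := (spec_iff hja c.blocks).mpr ⟨h4, h5⟩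
        rw [comp_len_eq] at h1
        refine ⟨⟨by omega, ?_, ?_⟩, h4, h5⟩
        · rw [svL_cons, if_pos hsp]; omega
        · rw [dsvL_cons, if_pos hsp, hg]; omega
    · rw [if_neg hcond, Finset.card_eq_zero, Finset.filter_eq_empty_iff]
      rintro c - ⟨⟨h1, h2, h3⟩, h4, h5⟩
      obtain ⟨hsp, hg⟩ := (spec_iff hja c.blocks).mpr ⟨h4, h5⟩
      rw [svL_cons, if_pos hsp] at h2
      rw [dsvL_cons, if_pos hsp, hg] at h3
      exact hcond ⟨by omega, by omega⟩
lemma partitionF (a : ℕ) (ha : 1 ≤ a) (n k s t : ℕ) :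
    cntF n k s t = cntNS a n k s t + ∑ j ∈ Finset.Icc 1 (a-1), cntS a j n k s t :=
  split_spec a ha n (P := fun bl => bl.length = k ∧ svL bl = s ∧ dsvL bl = t)

lemma key' (a : ℕ) (ha : 1 ≤ a) (n k s t : ℕ) :
    cntA a n k s t
      + ∑ j ∈ Finset.Icc 1 (a-1),
          (if a + j ≤ n ∧ 2 ≤ k then cntA a (n - (a+j)) (k-2) s t else 0)
    = (if a ≤ n ∧ 1 ≤ k then cntF (n-a) (k-1) s t else 0)
      + ∑ j ∈ Finset.Icc 1 (a-1),
          (if a + j ≤ n ∧ 2 ≤ k ∧ 1 ≤ s ∧ a - j ≤ t then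
            cntA a (n - (a+j)) (k-2) (s-1) (t-(a-j)) else 0) := by
  by_cases h : a ≤ n ∧ 1 ≤ k
  · obtain ⟨m, rfl⟩ : ∃ m, n = a + m := ⟨n - a, by omega⟩
    obtain ⟨k', rfl⟩ : ∃ k', k = k' + 1 := ⟨k - 1, by omega⟩
    rw [if_pos h]
    have hn' : a + m - a = m := by omega
    have hk' : k' + 1 - 1 = k' := by omega
    rw [hn', hk', decompA ha, partitionF a ha m k' s t]
    have hterm1 : ∀ j ∈ Finset.Icc 1 (a-1),
        (if a + j ≤ a + m ∧ 2 ≤ k' + 1 then cntA a (a + m - (a+j)) (k'+1-2) s t else 0)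
        = cntS a j m k' s t := by
      intro j hj
      simp only [Finset.mem_Icc] at hj
      rw [decompS ha hj.1 (by omega)]
      by_cases hc : a + j ≤ a + m ∧ 2 ≤ k' + 1
      · rw [if_pos hc]
        congr 1 <;> omega
      · rw [if_neg hc]
        symm
        apply cntA_eq_zero
        omega
    have hterm2 : ∀ j ∈ Finset.Icc 1 (a-1),
        (if a + j ≤ a + m ∧ 2 ≤ k' + 1 ∧ 1 ≤ s ∧ a - j ≤ t then
          cntA a (a + m - (a+j)) (k'+1-2) (s-1) (t-(a-j)) else 0)
        = (if 1 ≤ s ∧ a - j ≤ t then cntS a j m k' (s-1) (t-(a-j)) else 0) := by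
      intro j hj
      simp only [Finset.mem_Icc] at hj
      rw [decompS ha hj.1 (by omega)]
      by_cases hst : 1 ≤ s ∧ a - j ≤ t
      · rw [if_pos hst]
        by_cases hc2 : j ≤ m ∧ 1 ≤ k'
        · rw [if_pos ⟨by omega, by omega, hst⟩]
          congr 1 <;> omega
        · rw [if_neg (by omega)]
          symm
          apply cntA_eq_zero
          omega
      · rw [if_neg (by omega), if_neg hst]
    rw [Finset.sum_congr rfl hterm1, Finset.sum_congr rfl hterm2]
    omega
  · rw [if_neg h]
    rw [cntA_eq_zero (by omega)]
    rw [Finset.sum_eq_zero, Finset.sum_eq_zero]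
    · intro j hj
      rw [if_neg (by omega)]
    · intro j hj
      rw [if_neg (by omega)]
/-! ### Power series layer -/

open MvPowerSeries Finsupp


noncomputable def wE (a : ℕ) : Fin 4 →₀ ℕ := single 0 a + single 1 1
noncomputable def vE (a j : ℕ) : Fin 4 →₀ ℕ := single 1 2 + single 0 a + single 0 j
noncomputable def uE (a j : ℕ) : Fin 4 →₀ ℕ := single 1 2 + single 0 a + single 0 j
  + single 2 1 + single 3 (a - j)

lemma wE_apply (a : ℕ) : wE a 0 = a ∧ wE a 1 = 1 ∧ wE a 2 = 0 ∧ wE a 3 = 0 := by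
  refine ⟨?_, ?_, ?_, ?_⟩ <;> simp [wE, Finsupp.single_apply]

lemma vE_apply (a j : ℕ) : vE a j 0 = a + j ∧ vE a j 1 = 2 ∧ vE a j 2 = 0 ∧ vE a j 3 = 0 := by
  refine ⟨?_, ?_, ?_, ?_⟩ <;> simp [vE, Finsupp.single_apply]

lemma uE_apply (a j : ℕ) : uE a j 0 = a + j ∧ uE a j 1 = 2 ∧ uE a j 2 = 1 ∧
    uE a j 3 = a - j := by
  refine ⟨?_, ?_, ?_, ?_⟩ <;> simp [uE, Finsupp.single_apply]

lemma fin4_le {f m : Fin 4 →₀ ℕ} :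
    f ≤ m ↔ f 0 ≤ m 0 ∧ f 1 ≤ m 1 ∧ f 2 ≤ m 2 ∧ f 3 ≤ m 3 := by
  rw [Finsupp.le_def]
  constructor
  · intro h
    exact ⟨h 0, h 1, h 2, h 3⟩
  · rintro ⟨h0, h1, h2, h3⟩ i
    fin_cases i <;> assumption

lemma wE_le (a : ℕ) (m : Fin 4 →₀ ℕ) : wE a ≤ m ↔ a ≤ m 0 ∧ 1 ≤ m 1 := by
  obtain ⟨e0, e1, e2, e3⟩ := wE_apply a
  simp only [fin4_le, e0, e1, e2, e3]
  omega

lemma vE_le (a j : ℕ) (m : Fin 4 →₀ ℕ) : vE a j ≤ m ↔ a + j ≤ m 0 ∧ 2 ≤ m 1 := by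
  obtain ⟨e0, e1, e2, e3⟩ := vE_apply a j
  simp only [fin4_le, e0, e1, e2, e3]
  omega

lemma uE_le (a j : ℕ) (m : Fin 4 →₀ ℕ) :
    uE a j ≤ m ↔ a + j ≤ m 0 ∧ 2 ≤ m 1 ∧ 1 ≤ m 2 ∧ a - j ≤ m 3 := by
  obtain ⟨e0, e1, e2, e3⟩ := uE_apply a j
  simp only [fin4_le, e0, e1, e2, e3]

lemma coeff_Fdsv (m : Fin 4 →₀ ℕ) :
    MvPowerSeries.coeff m Fdsv = (cntF (m 0) (m 1) (m 2) (m 3) : ℚ) := rfl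

lemma coeff_FdsvA (a : ℕ) (m : Fin 4 →₀ ℕ) :
    MvPowerSeries.coeff m (FdsvA a) = (cntA a (m 0) (m 1) (m 2) (m 3) : ℚ) := rfl

lemma core_eq (a : ℕ) (ha : 1 ≤ a) :
    FdsvA a + (∑ j ∈ Finset.Icc 1 (a-1), MvPowerSeries.monomial (vE a j) 1) * FdsvA a
    = (MvPowerSeries.monomial (wE a) 1) * Fdsv
      + (∑ j ∈ Finset.Icc 1 (a-1), MvPowerSeries.monomial (uE a j) 1) * FdsvA a := by
  apply MvPowerSeries.ext
  intro m
  rw [map_add, map_add, Finset.sum_mul, Finset.sum_mul, map_sum, map_sum]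
  simp only [MvPowerSeries.coeff_monomial_mul, one_mul, coeff_Fdsv, coeff_FdsvA,
    Finsupp.tsub_apply]
  have e2 : ∀ j ∈ Finset.Icc 1 (a-1),
      (if vE a j ≤ m then
        (cntA a (m 0 - vE a j 0) (m 1 - vE a j 1) (m 2 - vE a j 2) (m 3 - vE a j 3) : ℚ)
      else 0)
      = ((if a + j ≤ m 0 ∧ 2 ≤ m 1 then
          cntA a (m 0 - (a+j)) (m 1 - 2) (m 2) (m 3) else 0 : ℕ) : ℚ) := by
    intro j _
    obtain ⟨e0, e1, e2, e3⟩ := vE_apply a j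
    simp only [vE_le, e0, e1, e2, e3]
    split <;> simp
  have e3 : ∀ j ∈ Finset.Icc 1 (a-1),
      (if uE a j ≤ m then
        (cntA a (m 0 - uE a j 0) (m 1 - uE a j 1) (m 2 - uE a j 2) (m 3 - uE a j 3) : ℚ)
      else 0)
      = ((if a + j ≤ m 0 ∧ 2 ≤ m 1 ∧ 1 ≤ m 2 ∧ a - j ≤ m 3 then
          cntA a (m 0 - (a+j)) (m 1 - 2) (m 2 - 1) (m 3 - (a-j)) else 0 : ℕ) : ℚ) := by
    intro j _
    obtain ⟨e0, e1, e2, e3⟩ := uE_apply a j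
    simp only [uE_le, e0, e1, e2, e3]
    split <;> simp
  have e1 : (if wE a ≤ m then
        (cntF (m 0 - wE a 0) (m 1 - wE a 1) (m 2 - wE a 2) (m 3 - wE a 3) : ℚ) else 0)
      = ((if a ≤ m 0 ∧ 1 ≤ m 1 then cntF (m 0 - a) (m 1 - 1) (m 2) (m 3) else 0 : ℕ) : ℚ) := by
    obtain ⟨e0, e1', e2, e3⟩ := wE_apply a
    simp only [wE_le, e0, e1', e2, e3]
    split <;> simp
  rw [Finset.sum_congr rfl e2, Finset.sum_congr rfl e3, e1]
  rw [← Nat.cast_sum, ← Nat.cast_sum, ← Nat.cast_add, ← Nat.cast_add, Nat.cast_inj]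
  exact key' a ha (m 0) (m 1) (m 2) (m 3)

lemma hX_mono (s : Fin 4) : Xv s = MvPowerSeries.monomial (single s 1) 1 := by
  have := MvPowerSeries.X_pow_eq (R := ℚ) s 1
  rwa [pow_one] at this

lemma hw_mono (a : ℕ) : (Xv 0)^a * Xv 1 = MvPowerSeries.monomial (wE a) 1 := by
  rw [MvPowerSeries.X_pow_eq, hX_mono 1, MvPowerSeries.monomial_mul_monomial, one_mul]
  rfl

lemma expand_mono (a j : ℕ) :
    (Xv 1)^2 * (Xv 0)^a * ((Xv 0)^j * (Xv 2 * (Xv 3)^(a-j) - 1))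
    = MvPowerSeries.monomial (uE a j) 1 - MvPowerSeries.monomial (vE a j) 1 := by
  have h2 : (Xv 1)^2 * (Xv 0)^a * ((Xv 0)^j * (Xv 2 * (Xv 3)^(a-j)))
      = MvPowerSeries.monomial (uE a j) 1 := by
    rw [MvPowerSeries.X_pow_eq 1 2, MvPowerSeries.X_pow_eq 0 a, MvPowerSeries.X_pow_eq 0 j,
      hX_mono 2, MvPowerSeries.X_pow_eq 3 (a-j)]
    simp only [MvPowerSeries.monomial_mul_monomial, one_mul]
    congr 1
    unfold uE
    abel_nf
  have h3 : (Xv 1)^2 * (Xv 0)^a * (Xv 0)^j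
      = MvPowerSeries.monomial (vE a j) 1 := by
    rw [MvPowerSeries.X_pow_eq 1 2, MvPowerSeries.X_pow_eq 0 a, MvPowerSeries.X_pow_eq 0 j]
    simp only [MvPowerSeries.monomial_mul_monomial, one_mul]
    rfl
  rw [mul_sub, mul_one, mul_sub, h2, h3]

/-- `F_a · (1 − y²·x^a·Σ_{j=1}^{a−1} x^j·(p·d^{a−j} − 1)) = x^a·y·F`. -/
theorem dsv_first_part_functional_equation (a : ℕ) (ha : 1 ≤ a) :
    FdsvA a * (1 - (Xv 1)^2 * (Xv 0)^a *
      ∑ j ∈ Finset.Icc 1 (a - 1), (Xv 0)^j * (Xv 2 * (Xv 3)^(a - j) - 1))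
    = (Xv 0)^a * Xv 1 * Fdsv := by
  have hcore := core_eq a ha
  have hsum : (Xv 1)^2 * (Xv 0)^a *
      ∑ j ∈ Finset.Icc 1 (a - 1), (Xv 0)^j * (Xv 2 * (Xv 3)^(a - j) - 1)
      = (∑ j ∈ Finset.Icc 1 (a-1), MvPowerSeries.monomial (uE a j) 1)
        - ∑ j ∈ Finset.Icc 1 (a-1), MvPowerSeries.monomial (vE a j) 1 := by
    rw [Finset.mul_sum, ← Finset.sum_sub_distrib]
    exact Finset.sum_congr rfl fun j _ => expand_mono a j
  rw [hsum, hw_mono a]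
  linear_combination hcore
end
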